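/- Let L and L' be relational first-order languages, let 𝒜 be an L-structure and ℬ an L'-structure, and let (g, f) be a semi-retraction between 𝒜 and ℬ. Let A and B be finite substructures of 𝒜 and let A₀ and B₀ be the substructures of ℬ with underlying sets g(A) and g(B), respectively. Then for every substructure B₀' of ℬ with B₀' ≅ B₀, the following holds: for every substructure C₁ of 𝒜 whose underlying set is contained in the image f(B₀') and which is L-isomorphic to A, the preimage f⁻¹(C₁) is the underlying set of a substructure of ℬ that is L'-isomorphic to A₀. (In the paper's terminology: B₀' has the relational restricted inverse images under f property for A witnessed by A₀.) -/
import Mathlib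


open FirstOrder FirstOrder.Language

/-- Two same-length tuples have the same quantifier-free type over ∅. -/
def SameQfType (L : FirstOrder.Language) (M : Type*) [L.Structure M] {n : ℕ}
    (x y : Fin n → M) : Prop :=
  ∀ φ : L.Formula (Fin n), φ.IsQF → (φ.Realize x ↔ φ.Realize y)

/-- A qftp-respecting injection between structures in possibly different languages. -/
def QftpRespecting (L L' : FirstOrder.Language) (M N : Type*) [L.Structure M] [L'.Structure N]
    (h : M → N) : Prop :=
  Function.Injective h ∧
    ∀ (n : ℕ) (x y : Fin n → M), SameQfType L M x y → SameQfType L' N (h ∘ x) (h ∘ y)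

/-- `(g, f)` is a semi-retraction between `M` and `N`: both maps are qftp-respecting
injections and `f ∘ g` is qftp-preserving (equivalently, an `L`-embedding of `M` into `M`). -/
def IsSemiRetraction (L L' : FirstOrder.Language) (M N : Type*)
    [L.Structure M] [L'.Structure N] (g : M → N) (f : N → M) : Prop :=
  QftpRespecting L L' M N g ∧ QftpRespecting L' L N M f ∧
    ∀ (n : ℕ) (x : Fin n → M), SameQfType L M x (f ∘ g ∘ x)

/-- `M` is locally finite: every finitely generated substructure is finite. -/
def StructLocallyFinite (L : FirstOrder.Language) (M : Type*) [L.Structure M] : Prop :=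
  ∀ S : L.Substructure M, S.FG → (S : Set M).Finite

/-- `M → (B)^A_{r,d}` for substructures. -/
def ArrowSub (L : FirstOrder.Language) (M : Type*) [L.Structure M]
    (A B : L.Substructure M) (r d : ℕ) : Prop :=
  ∀ c : L.Substructure M → Fin r, ∃ B' : L.Substructure M,
    Nonempty (B' ≃[L] B) ∧
      (c '' {A' : L.Substructure M | A' ≤ B' ∧ Nonempty (A' ≃[L] A)}).ncard ≤ d

/-- `M →ᵉ (B)^A_{r,d}` for embeddings. -/
def ArrowEmb (L : FirstOrder.Language) (M : Type*) [L.Structure M]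
    (A B : L.Substructure M) (r d : ℕ) : Prop :=
  ∀ c : (A ↪[L] M) → Fin r, ∃ h : B ↪[L] M,
    (c '' {j : A ↪[L] M | ∃ e : A ↪[L] B, j = h.comp e}).ncard ≤ d

/-- A structure is rigid if its only automorphism is the identity. -/
def IsRigidStructure (L : FirstOrder.Language) (M : Type*) [L.Structure M] : Prop :=
  ∀ σ : M ≃[L] M, ∀ x : M, σ x = x


/- **Statement 10** (Proposition 5.10 / `prop_rlnl_restricted`): for relational languages and a
semi-retraction `(g, f)` between `𝒜` and `ℬ`, with `A, B` finite substructures of `𝒜` and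
`A₀, B₀` the substructures of `ℬ` on `g(A), g(B)`, every copy `B₀'` of `B₀` in `ℬ` has the
relational restricted inverse images under `f` property for `A` witnessed by `A₀`. -/

section AuxSemiRetract


variable {L : FirstOrder.Language} {M : Type*} [L.Structure M]

lemma SameQfType.symm' {n : ℕ} {x y : Fin n → M} (h : SameQfType L M x y) :
    SameQfType L M y x := fun φ hφ => (h φ hφ).symm

lemma SameQfType.trans' {n : ℕ} {x y z : Fin n → M} (h1 : SameQfType L M x y)
    (h2 : SameQfType L M y z) : SameQfType L M x z :=
  fun φ hφ => (h1 φ hφ).trans (h2 φ hφ)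

lemma qf_realize_embedding' {N : Type*} [L.Structure N] (e : M ↪[L] N) {n : ℕ}
    {φ : L.Formula (Fin n)} (hφ : φ.IsQF) (x : Fin n → M) :
    φ.Realize (⇑e ∘ x) ↔ φ.Realize x := by
  have h := hφ.realize_embedding e (v := x) (xs := (default : Fin 0 → M))
  have hd : (⇑e ∘ (default : Fin 0 → M)) = (default : Fin 0 → N) :=
    funext fun i => i.elim0
  unfold Formula.Realize
  rw [← hd]
  exact h

/-- For an isomorphism `e` between substructures `S` and `T` of `M`, any tuple from `S`
has the same qf-type (in `M`) as its image under `e`. -/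
lemma sameQfType_equiv_tuple {S T : L.Substructure M} (e : S ≃[L] T) {n : ℕ}
    (x : Fin n → S) :
    SameQfType L M (fun i => ((x i : M))) (fun i => ((e (x i) : M))) := by
  intro φ hφ
  have h1 : φ.Realize (fun i => ((x i : M))) ↔ φ.Realize x :=
    qf_realize_embedding' S.subtype hφ x
  have h2 : φ.Realize (⇑e.toEmbedding ∘ x) ↔ φ.Realize x :=
    qf_realize_embedding' e.toEmbedding hφ x
  have h3 : φ.Realize (fun i => ((e (x i) : M))) ↔ φ.Realize (⇑e ∘ x) :=
    qf_realize_embedding' T.subtype hφ (⇑e ∘ x)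
  exact h1.trans (h2.symm.trans h3.symm)

end AuxSemiRetract

/-- Proposition 5.10 / `prop_rlnl_restricted`: for relational languages and a
semi-retraction `(g, f)` between `𝒜` and `ℬ`, with `A, B` finite substructures of `𝒜` and
`A₀, B₀` the substructures of `ℬ` on `g(A), g(B)`, every copy `B₀'` of `B₀` in `ℬ` has the
relational restricted inverse images under `f` property for `A` witnessed by `A₀`. -/
theorem relational_restricted_inverse_images_under_f
    {L L' : FirstOrder.Language} [L.IsRelational] [L'.IsRelational]
    {M N : Type*} [L.Structure M] [L'.Structure N]
    (g : M → N) (f : N → M)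
    (hsr : IsSemiRetraction L L' M N g f)
    (A B : L.Substructure M) (hAfin : (A : Set M).Finite) (hBfin : (B : Set M).Finite)
    (A₀ B₀ : L'.Substructure N)
    (hA₀ : (A₀ : Set N) = g '' (A : Set M)) (hB₀ : (B₀ : Set N) = g '' (B : Set M))
    (B₀' : L'.Substructure N) (hB₀iso : Nonempty (B₀' ≃[L'] B₀))
    (C₁ : L.Substructure M) (hC₁sub : (C₁ : Set M) ⊆ f '' (B₀' : Set N))
    (hC₁iso : Nonempty (C₁ ≃[L] A)) :
    ∃ A₀' : L'.Substructure N, (A₀' : Set N) = f ⁻¹' (C₁ : Set M) ∧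
      Nonempty (A₀' ≃[L'] A₀) := by
  obtain ⟨⟨hginj, hg⟩, ⟨hfinj, hf⟩, hfg⟩ := hsr
  obtain ⟨σ⟩ := hB₀iso
  obtain ⟨θ⟩ := hC₁iso
  -- the substructure on the preimage set
  set D : Set N := f ⁻¹' (C₁ : Set M) with hDdef
  let A₀'s : L'.Substructure N := ⟨D, fun {n} F => isEmptyElim F⟩
  have hmemD : ∀ x : N, x ∈ A₀'s ↔ f x ∈ C₁ := fun x => Iff.rfl
  -- D is contained in B₀'
  have hDB : ∀ x : N, x ∈ A₀'s → x ∈ B₀' := by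
    intro x hx
    obtain ⟨b, hbB, hfb⟩ := hC₁sub ((hmemD x).1 hx)
    rwa [← hfinj hfb]
  -- the candidate isomorphism as a raw function
  let F : A₀'s → A₀ := fun d =>
    ⟨g ((θ ⟨f (d : N), d.2⟩ : A) : M), by
      have : g ((θ ⟨f (d : N), d.2⟩ : A) : M) ∈ (A₀ : Set N) := by
        rw [hA₀]
        exact ⟨((θ ⟨f (d : N), d.2⟩ : A) : M), (θ ⟨f (d : N), d.2⟩).2, rfl⟩
      exact this⟩
  -- key claim: every tuple from D has the same qf-type in N as its F-image
  have key : ∀ (n : ℕ) (x : Fin n → A₀'s),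
      SameQfType L' N (fun i => ((x i : N))) (fun i => ((F (x i) : N))) := by
    intro n x
    set d : Fin n → N := fun i => (x i : N) with hd
    let u : Fin n → B₀' := fun i => ⟨d i, hDB _ (x i).2⟩
    -- choose preimages in B for the σ-images
    have hbex : ∀ i, ∃ b ∈ (B : Set M), g b = ((σ (u i) : N)) := by
      intro i
      have h2 : ((σ (u i) : N)) ∈ (B₀ : Set N) := (σ (u i)).2
      rw [hB₀] at h2
      obtain ⟨b, hb, hgb⟩ := h2
      exact ⟨b, hb, hgb⟩
    choose b hbB hgb using hbex
    have hgbd : (g ∘ b) = fun i => ((σ (u i) : N)) := funext fun i => hgb i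
    -- step 1 : d ∼ g ∘ b in N
    have step1 : SameQfType L' N d (g ∘ b) := by
      rw [hgbd]
      exact sameQfType_equiv_tuple σ u
    -- step 2 : f ∘ g ∘ b ∼ f ∘ d in M
    have step2 : SameQfType L M (f ∘ (g ∘ b)) (f ∘ d) := hf n (g ∘ b) d step1.symm'
    -- step 3 : b ∼ f ∘ g ∘ b in M
    have step3 : SameQfType L M b (f ∘ (g ∘ b)) := hfg n b
    have step4 : SameQfType L M b (f ∘ d) := step3.trans' step2
    -- step 5 : f ∘ d ∼ θ-image in M
    let c : Fin n → C₁ := fun i => ⟨f (d i), (x i).2⟩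
    have hfd : (f ∘ d) = fun i => ((c i : M)) := rfl
    have step5 : SameQfType L M (f ∘ d) (fun i => ((θ (c i) : M))) := by
      rw [hfd]
      exact sameQfType_equiv_tuple θ c
    have step6 : SameQfType L M b (fun i => ((θ (c i) : M))) := step4.trans' step5
    -- step 7 : apply g
    have step7 : SameQfType L' N (g ∘ b) (g ∘ fun i => ((θ (c i) : M))) :=
      hg n b _ step6
    have : SameQfType L' N d (g ∘ fun i => ((θ (c i) : M))) := step1.trans' step7
    exact this
  -- F is bijective
  have hFinj : Function.Injective F := by
    intro d₁ d₂ h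
    have h1 : g ((θ ⟨f (d₁ : N), d₁.2⟩ : A) : M) = g ((θ ⟨f (d₂ : N), d₂.2⟩ : A) : M) :=
      congrArg Subtype.val h
    have h2 := hginj h1
    have h3 : θ ⟨f (d₁ : N), d₁.2⟩ = θ ⟨f (d₂ : N), d₂.2⟩ := Subtype.ext h2
    have h4 : (⟨f (d₁ : N), d₁.2⟩ : C₁) = ⟨f (d₂ : N), d₂.2⟩ := θ.injective h3
    have h5 : f (d₁ : N) = f (d₂ : N) := congrArg Subtype.val h4
    exact Subtype.ext (hfinj h5)
  have hFsurj : Function.Surjective F := by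
    rintro ⟨a, ha⟩
    have ha' : a ∈ (A₀ : Set N) := ha
    rw [hA₀] at ha'
    obtain ⟨m, hmA, hgm⟩ := ha'
    set cc : C₁ := θ.symm ⟨m, hmA⟩ with hcc
    obtain ⟨nb, hnb, hfnb⟩ := hC₁sub cc.2
    have hnbD : nb ∈ A₀'s := by
      rw [hmemD, hfnb]; exact cc.2
    refine ⟨⟨nb, hnbD⟩, ?_⟩
    apply Subtype.ext
    show g ((θ ⟨f nb, hnbD⟩ : A) : M) = a
    have h1 : (⟨f nb, hnbD⟩ : C₁) = cc := Subtype.ext hfnb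
    rw [h1, hcc, θ.apply_symm_apply]
    exact hgm
  let E : A₀'s ≃ A₀ := Equiv.ofBijective F ⟨hFinj, hFsurj⟩
  refine ⟨A₀'s, rfl, ⟨⟨E, ?_, ?_⟩⟩⟩
  · intro n fn x
    exact isEmptyElim fn
  · intro n r x
    have hkey := key n x
    have hqf : ((r.formula fun i => Term.var i : L'.Formula (Fin n))).IsQF :=
      (BoundedFormula.IsAtomic.rel r _).isQF
    have h := hkey _ hqf
    simp only [Formula.realize_rel, Term.realize_var, Term.realize_relabel] at h
    exact h.symm
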